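/- Let f ∈ Homeo₀(𝕋^d) with lift F, let K ⊆ 𝕋^d be a compact f-invariant set such that f restricted to K is topologically transitive, let v ∈ ℝ^d \ {0}, λ ∈ ℝ with ρ_K(F) ⊆ λv + {v}^⊥. If sup_{n∈ℕ, z∈K} |D_v(n,z)| = ∞, then sup_{n∈ℕ} |D_v(n,z)| = ∞ for every z ∈ K whose forward orbit under f is dense in K. -/

import Mathlib

open Filter Topology Set
open scoped RealInnerProductSpace

noncomputable section

abbrev E (d : ℕ) : Type := EuclideanSpace ℝ (Fin d)

/-- The integer lattice `ℤ^d` inside `ℝ^d`. -/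
def intLattice (d : ℕ) : AddSubgroup (E d) where
  carrier := {x : E d | ∀ i, ∃ m : ℤ, x i = (m : ℝ)}
  zero_mem' := fun i => ⟨0, by simp⟩
  add_mem' := by
    intro a b ha hb i
    obtain ⟨m, hm⟩ := ha i
    obtain ⟨n, hn⟩ := hb i
    refine ⟨m + n, ?_⟩
    have h : (a + b) i = a i + b i := rfl
    rw [h, hm, hn]; push_cast; ring
  neg_mem' := by
    intro a ha i
    obtain ⟨m, hm⟩ := ha i
    refine ⟨-m, ?_⟩
    have h : (-a) i = -(a i) := rfl
    rw [h, hm]; push_cast; ring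

/-- The torus `𝕋^d = ℝ^d / ℤ^d`. -/
abbrev Torus (d : ℕ) : Type := E d ⧸ intLattice d

/-- The canonical projection `π : ℝ^d → 𝕋^d`. -/
def Tproj (d : ℕ) : E d → Torus d := QuotientAddGroup.mk

/-- `F` is a lift of `f`; together with `F` being a homeomorphism this encodes
`f ∈ Homeo₀(𝕋^d)` with lift `F`. -/
def IsLiftOf {d : ℕ} (F : E d ≃ₜ E d) (f : Torus d → Torus d) : Prop :=
  (∀ z : E d, Tproj d (F z) = f (Tproj d z)) ∧
  (∀ z : E d, ∀ m ∈ intLattice d, F (z + m) = F z + m)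

/-- The rotation set of `f` on `A ⊆ 𝕋^d`. -/
def rotSetOn {d : ℕ} (F : E d ≃ₜ E d) (A : Set (Torus d)) : Set (E d) :=
  {ρ | ∃ (n : ℕ → ℕ) (z : ℕ → E d), StrictMono n ∧ (∀ i, Tproj d (z i) ∈ A) ∧
      Tendsto (fun i => (n i : ℝ)⁻¹ • ((F : E d → E d)^[n i] (z i) - z i)) atTop (𝓝 ρ)}

/-- The rotation set `ρ(F)`. -/
def rotSet {d : ℕ} (F : E d ≃ₜ E d) : Set (E d) := rotSetOn F Set.univ

/-- The deviation from the constant rotation, `D(n,z) = F^n(z) - z - nρ`. -/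
def dev {d : ℕ} (F : E d ≃ₜ E d) (ρ : E d) (n : ℕ) (z : E d) : E d :=
  (F : E d → E d)^[n] z - z - (n : ℝ) • ρ

/-- The deviation parallel to `v`, `D_v(n,z) = ⟨F^n(z) - z - nρ, v⟩`. -/
def devIn {d : ℕ} (F : E d ≃ₜ E d) (ρ : E d) (v : E d) (n : ℕ) (z : E d) : ℝ :=
  ⟪dev F ρ n z, v⟫

/-- `1, ρ_1, …, ρ_d` are linearly independent over `ℚ`. -/
def TotallyIrrational {d : ℕ} (ρ : E d) : Prop :=
  ∀ (k : Fin d → ℤ) (m : ℤ), (∑ i, (k i : ℝ) * ρ i) = (m : ℝ) → ∀ i, k i = 0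

/-- `f` has bounded mean motion (w.r.t. the rotation vector `ρ`). -/
def BoundedMeanMotion {d : ℕ} (F : E d ≃ₜ E d) (ρ : E d) : Prop :=
  ∃ C : ℝ, ∀ (n : ℕ) (z : E d), ‖dev F ρ n z‖ ≤ C

/-- `f` is non-wandering: no nonempty open set is wandering. -/
def NonWandering {d : ℕ} (f : Torus d → Torus d) : Prop :=
  ∀ U : Set (Torus d), IsOpen U → U.Nonempty → ∃ n : ℕ, 0 < n ∧ (U ∩ f^[n] '' U).Nonempty

/-- Projection of the deviation vector to the linear subspace `V`. -/
def devProj {d : ℕ} (F : E d ≃ₜ E d) (V : Submodule ℝ (E d)) (ρ : E d) (n : ℕ) (z : E d) : E d :=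
  (V.orthogonalProjectionOnto (dev F ρ n z) : E d)

/-- The set of asymptotic directions `𝒜_V(z)`. -/
def asympDirs {d : ℕ} (F : E d ≃ₜ E d) (V : Submodule ℝ (E d)) (ρ : E d) (z : E d) :
    Set (E d) :=
  {v | ‖v‖ = 1 ∧ ∀ ε > (0 : ℝ), ∀ r > (0 : ℝ), ∃ n : ℕ,
      r < ‖devProj F V ρ n z‖ ∧ ‖(‖devProj F V ρ n z‖)⁻¹ • devProj F V ρ n z - v‖ < ε}

/-- `S^+(v) = {w ∈ 𝕊^{d-1} : ⟨v,w⟩ > 0}`. -/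
def Splus {d : ℕ} (v : E d) : Set (E d) := {w | ‖w‖ = 1 ∧ 0 < ⟪v, w⟫}

/-- `z` is `ε`-Lyapunov stable for `h`. -/
def LyapStable {X : Type*} [PseudoMetricSpace X] (h : X → X) (ε : ℝ) (z : X) : Prop :=
  ∃ δ > (0 : ℝ), ∀ n : ℕ, ∀ w, dist z w < δ → dist (h^[n] z) (h^[n] w) < ε

/-- `ε_f`, the largest `ε` such that `ε`-close points have `1/2`-close images. -/
def epsF {d : ℕ} (f : Torus d → Torus d) : ℝ :=
  sSup {ε : ℝ | 0 < ε ∧ ∀ z z' : Torus d, dist z z' < ε → dist (f z) (f z') < 1 / 2}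

/-- `ℤ`-indexed iterates of a homeomorphism. -/
def iterZ {d : ℕ} (F : E d ≃ₜ E d) : ℤ → E d → E d
  | .ofNat n => (F : E d → E d)^[n]
  | .negSucc n => (F.symm : E d → E d)^[n + 1]

/-- `ℤ`-indexed deviations parallel to `v`. -/
def devZIn {d : ℕ} (F : E d ≃ₜ E d) (ρ v : E d) (n : ℤ) (z : E d) : ℝ :=
  ⟪iterZ F n z - z - (n : ℝ) • ρ, v⟫


-- aux lemmas
lemma iter_lift {d : ℕ} (F : E d ≃ₜ E d) (f : Torus d → Torus d) (h : IsLiftOf F f) :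
    ∀ n z m, m ∈ intLattice d → (F : E d → E d)^[n] (z + m) = (F : E d → E d)^[n] z + m := by
  intro n
  induction n with
  | zero => intro z m hm; simp
  | succ n ih =>
    intro z m hm
    rw [Function.iterate_succ_apply', Function.iterate_succ_apply', ih z m hm, h.2 _ _ hm]

lemma devIn_periodic {d : ℕ} (F : E d ≃ₜ E d) (f : Torus d → Torus d) (h : IsLiftOf F f)
    (ρ v : E d) (n : ℕ) (z m : E d) (hm : m ∈ intLattice d) :
    devIn F ρ v n (z + m) = devIn F ρ v n z := by
  unfold devIn dev
  rw [iter_lift F f h n z m hm]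
  congr 1
  abel

lemma devIn_cocycle {d : ℕ} (F : E d ≃ₜ E d) (ρ v : E d) (n k : ℕ) (z : E d) :
    devIn F ρ v (n + k) z = devIn F ρ v n z + devIn F ρ v k ((F : E d → E d)^[n] z) := by
  unfold devIn dev
  rw [← inner_add_left]
  congr 1
  rw [add_comm n k, Function.iterate_add_apply F k n z]
  push_cast [add_comm n k]
  rw [add_smul]
  abel

lemma tproj_iter {d : ℕ} (F : E d ≃ₜ E d) (f : Torus d → Torus d) (h : IsLiftOf F f)
    (n : ℕ) (z : E d) : Tproj d ((F : E d → E d)^[n] z) = f^[n] (Tproj d z) := by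
  induction n with
  | zero => simp
  | succ n ih =>
    rw [Function.iterate_succ_apply', Function.iterate_succ_apply', h.1, ih]

/-- **Corollary (transitive orbits).** If `f|K` is topologically transitive,
`ρ_K(F) ⊆ λv + {v}^⊥` and the deviations parallel to `v` are unbounded on `K`, then
every point of `K` with dense forward orbit has unbounded deviations. -/
theorem unbounded_devIn_of_denseOrbit {d : ℕ} (f : Torus d → Torus d) (F : E d ≃ₜ E d)
    (hlift : IsLiftOf F f) (K : Set (Torus d)) (hKc : IsCompact K) (hKinv : f '' K = K)
    (htrans : ∃ z₀ ∈ K, K ⊆ closure (Set.range fun n : ℕ => f^[n] z₀))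
    (v : E d) (hv : v ≠ 0) (lam : ℝ)
    (hrot : ∀ ρ' ∈ rotSetOn F K, ⟪ρ' - lam • v, v⟫ = 0)
    (hunb : ∀ C : ℝ, ∃ (n : ℕ) (z : E d), Tproj d z ∈ K ∧ C < |devIn F (lam • v) v n z|) :
    ∀ z : E d, Tproj d z ∈ K →
      K ⊆ closure (Set.range fun n : ℕ => f^[n] (Tproj d z)) →
      ∀ C : ℝ, ∃ n : ℕ, C < |devIn F (lam • v) v n z| := by
  intro z hz hdense C
  by_contra hcon
  push_neg at hcon
  have hC0 : 0 ≤ C := by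
    have := hcon 0
    simp [devIn, dev] at this
    linarith [abs_nonneg (devIn F (lam • v) v 0 z), this]
  obtain ⟨m, w, hwK, hw⟩ := hunb (2 * C)
  set ρ := lam • v with hρ
  set U : Set (E d) := {y | 2 * C < |devIn F ρ v m y|} with hU
  have hUopen : IsOpen U := by
    have hcont : Continuous fun y => devIn F ρ v m y := by
      unfold devIn dev
      exact Continuous.inner
        (((F.continuous.iterate m).sub continuous_id).sub continuous_const) continuous_const
    exact isOpen_lt continuous_const (hcont.abs)
  have hopen2 : IsOpen (Tproj d '' U) :=
    (QuotientAddGroup.isOpenMap_coe (N := intLattice d)) U hUopen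
  have hmem := hdense hwK
  rw [mem_closure_iff] at hmem
  obtain ⟨t, htU, htR⟩ := hmem (Tproj d '' U) hopen2 ⟨w, hw, rfl⟩
  obtain ⟨n, hn⟩ := htR
  obtain ⟨y, hyU, hyproj⟩ := htU
  have hπ : Tproj d ((F : E d → E d)^[n] z) = t := by
    rw [tproj_iter F f hlift]; exact hn
  have hlat : y - (F : E d → E d)^[n] z ∈ intLattice d := by
    have : Tproj d y = Tproj d ((F : E d → E d)^[n] z) := by rw [hπ, hyproj]
    have h2 := (QuotientAddGroup.eq (s := intLattice d)).mp this.symm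
    simpa [neg_add_eq_sub] using h2
  have hdev : devIn F ρ v m ((F : E d → E d)^[n] z) = devIn F ρ v m y := by
    have hyy : y = (F : E d → E d)^[n] z + (y - (F : E d → E d)^[n] z) := by abel
    rw [hyy]
    exact (devIn_periodic F f hlift ρ v m _ _ hlat).symm
  have hco := devIn_cocycle F ρ v n m z
  have h1 := hcon n
  have h2 := hcon (n + m)
  have hy : 2 * C < |devIn F ρ v m y| := hyU
  rw [← hdev] at hy
  have heq : devIn F ρ v m ((F : E d → E d)^[n] z)
      = devIn F ρ v (n + m) z - devIn F ρ v n z := by rw [hco]; ring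
  have hle : |devIn F ρ v m ((F : E d → E d)^[n] z)| ≤
      |devIn F ρ v (n + m) z| + |devIn F ρ v n z| := by
    rw [heq]; exact abs_sub _ _
  linarith

end
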